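/- (Loomis–Whitney corollary) For any finite set A ⊆ ℤ^d, if A_i denotes the projection of A deleting the i-th coordinate, then ∏_{i=1}^{d} |A_i| ≥ |A|^{d−1}; consequently there exists j with |A_j| ≥ |A|^{(d−1)/d}. -/

import Mathlib

open Finset Real


lemma my_holder {ι : Type*} (n : ℕ) (hn : 0 < n) (s : Finset ι) (f : Fin n → ι → ℝ)
    (hf : ∀ i, ∀ t ∈ s, 0 ≤ f i t) :
    ∑ t ∈ s, ∏ i, (f i t) ^ ((n : ℝ)⁻¹) ≤ ∏ i, (∑ t ∈ s, f i t) ^ ((n : ℝ)⁻¹) := by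
  have hinv : (0:ℝ) < (n : ℝ)⁻¹ := by positivity
  by_cases hz : ∃ i, ∑ t ∈ s, f i t = 0
  · obtain ⟨i, hi⟩ := hz
    have hzero : ∀ t ∈ s, f i t = 0 := by
      intro t ht
      exact (Finset.sum_eq_zero_iff_of_nonneg (fun t ht => hf i t ht)).1 hi t ht
    have : ∑ t ∈ s, ∏ j, (f j t) ^ ((n : ℝ)⁻¹) = 0 := by
      refine Finset.sum_eq_zero fun t ht => Finset.prod_eq_zero (Finset.mem_univ i) ?_
      rw [hzero t ht, Real.zero_rpow (ne_of_gt hinv)]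
    rw [this]
    exact Finset.prod_nonneg fun j _ => Real.rpow_nonneg
      (Finset.sum_nonneg fun t ht => hf j t ht) _
  · push_neg at hz
    set S : Fin n → ℝ := fun i => ∑ t ∈ s, f i t with hS
    have hSpos : ∀ i, 0 < S i := fun i =>
      lt_of_le_of_ne (Finset.sum_nonneg fun t ht => hf i t ht) (Ne.symm (hz i))
    have key : ∀ t ∈ s, ∏ i, (f i t) ^ ((n : ℝ)⁻¹) =
        (∏ i, (S i) ^ ((n : ℝ)⁻¹)) * ∏ i, (f i t / S i) ^ ((n : ℝ)⁻¹) := by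
      intro t ht
      rw [← Finset.prod_mul_distrib]
      refine Finset.prod_congr rfl fun i _ => ?_
      rw [← Real.mul_rpow (le_of_lt (hSpos i)) (div_nonneg (hf i t ht) (le_of_lt (hSpos i))),
        mul_div_cancel₀ _ (ne_of_gt (hSpos i))]
    calc ∑ t ∈ s, ∏ i, (f i t) ^ ((n : ℝ)⁻¹)
        = (∏ i, (S i) ^ ((n : ℝ)⁻¹)) * ∑ t ∈ s, ∏ i, (f i t / S i) ^ ((n : ℝ)⁻¹) := by
          rw [Finset.mul_sum]; exact Finset.sum_congr rfl key
      _ ≤ (∏ i, (S i) ^ ((n : ℝ)⁻¹)) * 1 := by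
          refine mul_le_mul_of_nonneg_left ?_
            (Finset.prod_nonneg fun i _ => Real.rpow_nonneg (le_of_lt (hSpos i)) _)
          have amgm : ∀ t ∈ s, ∏ i, (f i t / S i) ^ ((n : ℝ)⁻¹) ≤
              ∑ i, (n : ℝ)⁻¹ * (f i t / S i) := by
            intro t ht
            exact Real.geom_mean_le_arith_mean_weighted Finset.univ (fun _ => (n : ℝ)⁻¹)
              (fun i => f i t / S i) (fun i _ => le_of_lt hinv)
              (by simp [Finset.card_univ]; field_simp)
              (fun i _ => div_nonneg (hf i t ht) (le_of_lt (hSpos i)))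
          calc ∑ t ∈ s, ∏ i, (f i t / S i) ^ ((n : ℝ)⁻¹)
              ≤ ∑ t ∈ s, ∑ i, (n : ℝ)⁻¹ * (f i t / S i) := Finset.sum_le_sum amgm
            _ = 1 := by
                rw [Finset.sum_comm]
                have : ∀ i ∈ (Finset.univ : Finset (Fin n)),
                    ∑ t ∈ s, (n : ℝ)⁻¹ * (f i t / S i) = (n : ℝ)⁻¹ := by
                  intro i _
                  rw [← Finset.mul_sum, ← Finset.sum_div]
                  have hSi : S i = ∑ t ∈ s, f i t := rfl
                  rw [← hSi, div_self (ne_of_gt (hSpos i)), mul_one]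
                rw [Finset.sum_congr rfl this]
                simp [Finset.card_univ]
                field_simp
      _ = ∏ i, (S i) ^ ((n : ℝ)⁻¹) := mul_one _

lemma snoc_inj {d : ℕ} (t : ℤ) : Function.Injective
    (fun z : Fin d → ℤ => (Fin.snoc z t : Fin (d+1) → ℤ)) := by
  intro a b h
  funext j
  have := congrFun h (Fin.castSucc j)
  simpa using this

lemma succAbove_castSucc_apply_last {d : ℕ} (i : Fin (d+1)) :
    (Fin.castSucc i).succAbove (Fin.last d) = Fin.last (d+1) := by
  rw [Fin.succAbove_of_le_castSucc _ _ (Fin.castSucc_le_castSucc_iff.2 (Fin.le_last i)),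
    Fin.succ_last]

lemma comp_succAbove_eq_snoc {d : ℕ} (i : Fin (d+1)) (x : Fin (d+2) → ℤ) (t : ℤ)
    (hx : x (Fin.last (d+1)) = t) :
    x ∘ (Fin.castSucc i).succAbove = Fin.snoc (x ∘ Fin.castSucc ∘ i.succAbove) t := by
  funext j
  induction j using Fin.lastCases with
  | last => simp [succAbove_castSucc_apply_last, hx]
  | cast j => simp [Fin.castSucc_succAbove_castSucc]

lemma root_pow {d : ℕ} {y : ℝ} (hy : 0 ≤ y) :
    (y ^ (((d : ℝ) + 1)⁻¹)) ^ (d + 1) = y := by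
  rw [← Real.rpow_natCast (y ^ (((d : ℝ) + 1)⁻¹)) (d + 1), ← Real.rpow_mul hy]
  push_cast
  rw [inv_mul_cancel₀ (by positivity), Real.rpow_one]

lemma le_root {d : ℕ} {a y : ℝ} (h : a ^ (d + 1) ≤ y) (ha : 0 ≤ a) (hy : 0 ≤ y) :
    a ≤ y ^ (((d : ℝ) + 1)⁻¹) := by
  have h2 : (a ^ (d + 1) : ℝ) ^ (((d : ℝ) + 1)⁻¹) ≤ y ^ (((d : ℝ) + 1)⁻¹) :=
    Real.rpow_le_rpow (by positivity) h (by positivity)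
  calc a = ((a ^ (d + 1) : ℝ)) ^ (((d : ℝ) + 1)⁻¹) := by
            rw [← Real.rpow_natCast a (d + 1), ← Real.rpow_mul ha]
            push_cast
            rw [mul_inv_cancel₀ (by positivity), Real.rpow_one]
    _ ≤ _ := h2

section Step
variable (d : ℕ) (A : Finset (Fin (d + 2) → ℤ))

set_option maxHeartbeats 2000000 in
lemma step (hne : A.Nonempty)
    (ih : ∀ B : Finset (Fin (d + 1) → ℤ), B.Nonempty →
      (B.card : ℝ) ^ d ≤ ∏ i : Fin (d + 1), ((B.image fun x => x ∘ Fin.succAbove i).card : ℝ)) :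
    (A.card : ℝ) ^ (d + 1) ≤
      ∏ i : Fin (d + 2), ((A.image fun x => x ∘ Fin.succAbove i).card : ℝ) := by
  classical
  set L : Fin (d + 2) := Fin.last (d + 1) with hL
  set T : Finset ℤ := A.image (fun x => x L) with hT
  set F : ℤ → Finset (Fin (d + 2) → ℤ) := fun t => A.filter (fun x => x L = t) with hF
  set B : ℤ → Finset (Fin (d + 1) → ℤ) := fun t => (F t).image (fun x => x ∘ Fin.castSucc)
    with hB
  set P : Fin (d + 2) → ℕ := fun i => (A.image fun x => x ∘ Fin.succAbove i).card with hP
  set c : Fin (d + 1) → ℤ → ℕ := fun i t => ((B t).image fun z => z ∘ i.succAbove).card with hc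
  set κ : ℝ := ((d : ℝ) + 1)⁻¹ with hκ
  -- card decomposition
  have hcardsum : A.card = ∑ t ∈ T, (F t).card :=
    Finset.card_eq_sum_card_fiberwise (fun x hx => Finset.mem_image_of_mem _ hx)
  have hBcard : ∀ t, (B t).card = (F t).card := by
    intro t
    refine Finset.card_image_of_injOn fun x hx y hy hxy => ?_
    have hxL : x L = t := (Finset.mem_filter.1 hx).2
    have hyL : y L = t := (Finset.mem_filter.1 hy).2
    funext j
    induction j using Fin.lastCases with
    | last => rw [← hL, hxL, hyL]
    | cast j => exact congrFun hxy j
  have hFne : ∀ t ∈ T, (F t).Nonempty := by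
    intro t ht
    obtain ⟨x, hx, hxt⟩ := Finset.mem_image.1 ht
    exact ⟨x, Finset.mem_filter.2 ⟨hx, hxt⟩⟩
  have hBne : ∀ t ∈ T, (B t).Nonempty := fun t ht => (hFne t ht).image _
  have hBlast : ∀ t, (B t).card ≤ P L := by
    intro t
    have hsub : B t ⊆ A.image (fun x => x ∘ Fin.succAbove L) := by
      rw [hL, Fin.succAbove_last]
      exact Finset.image_subset_image (Finset.filter_subset _ _)
    exact Finset.card_le_card hsub
  -- key fiber bound
  have h6 : ∀ i : Fin (d + 1), ∑ t ∈ T, c i t ≤ P i.castSucc := by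
    intro i
    set D : ℤ → Finset (Fin (d + 1) → ℤ) :=
      fun t => (F t).image (fun x => x ∘ (Fin.castSucc i).succAbove) with hD
    have hDlast : ∀ t, ∀ z ∈ D t, z (Fin.last d) = t := by
      intro t z hz
      obtain ⟨x, hx, rfl⟩ := Finset.mem_image.1 hz
      have hxL : x L = t := (Finset.mem_filter.1 hx).2
      show x ((Fin.castSucc i).succAbove (Fin.last d)) = t
      rw [succAbove_castSucc_apply_last, ← hL, hxL]
    have hDcard : ∀ t, (D t).card = c i t := by
      intro t
      have e1 : (B t).image (fun z => z ∘ i.succAbove)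
          = (F t).image (fun x => x ∘ Fin.castSucc ∘ i.succAbove) := by
        rw [hB, Finset.image_image]
        rfl
      have e2 : D t = ((F t).image (fun x => x ∘ Fin.castSucc ∘ i.succAbove)).image
          (fun z => (Fin.snoc z t : Fin (d+1) → ℤ)) := by
        rw [hD, Finset.image_image]
        refine Finset.image_congr fun x hx => ?_
        exact comp_succAbove_eq_snoc i x t (Finset.mem_filter.1 hx).2
      simp only [hc]
      rw [e1, e2, Finset.card_image_of_injective _ (snoc_inj t)]
    have hdisj : (T : Set ℤ).PairwiseDisjoint D := by
      intro t ht t' ht' htt'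
      refine Finset.disjoint_left.2 fun z hz hz' => ?_
      exact htt' ((hDlast t z hz).symm.trans (hDlast t' z hz'))
    have hsub : T.biUnion D ⊆ A.image (fun x => x ∘ Fin.succAbove i.castSucc) := by
      refine Finset.biUnion_subset.2 fun t _ => ?_
      exact Finset.image_subset_image (Finset.filter_subset _ _)
    calc ∑ t ∈ T, c i t = ∑ t ∈ T, (D t).card := by
          exact Finset.sum_congr rfl fun t _ => (hDcard t).symm
      _ = (T.biUnion D).card := (Finset.card_biUnion fun t ht t' ht' h => hdisj ht ht' h).symm
      _ ≤ P i.castSucc := Finset.card_le_card hsub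
  -- per-fiber real bound
  have hstep : ∀ t ∈ T, ((F t).card : ℝ) ≤
      (P L : ℝ) ^ κ * ∏ i : Fin (d + 1), (c i t : ℝ) ^ κ := by
    intro t ht
    have hpow : ((F t).card : ℝ) ^ (d + 1) ≤ (P L : ℝ) * ∏ i : Fin (d + 1), (c i t : ℝ) := by
      have h1 : ((F t).card : ℝ) ^ (d + 1) = ((B t).card : ℝ) * ((B t).card : ℝ) ^ d := by
        rw [hBcard t, pow_succ, mul_comm]
      rw [h1]
      have h2 := ih (B t) (hBne t ht)
      have h3 : ((B t).card : ℝ) ≤ (P L : ℝ) := by exact_mod_cast hBlast t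
      exact mul_le_mul h3 h2 (pow_nonneg (Nat.cast_nonneg _) _) (Nat.cast_nonneg _)
    have := le_root hpow (Nat.cast_nonneg _)
      (mul_nonneg (Nat.cast_nonneg _) (Finset.prod_nonneg fun i _ => Nat.cast_nonneg _))
    refine this.trans_eq ?_
    rw [Real.mul_rpow (Nat.cast_nonneg _) (Finset.prod_nonneg fun i _ => Nat.cast_nonneg _),
      ← Real.finset_prod_rpow _ _ (fun i _ => Nat.cast_nonneg _) _]
  -- Hölder
  have holder := my_holder (d + 1) (Nat.succ_pos d) T (fun i t => (c i t : ℝ))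
    (fun i t _ => Nat.cast_nonneg _)
  push_cast at holder
  have hsum : (A.card : ℝ) ≤ (P L : ℝ) ^ κ * ∏ i : Fin (d + 1), ((P i.castSucc : ℝ)) ^ κ := by
    calc (A.card : ℝ) = ∑ t ∈ T, ((F t).card : ℝ) := by exact_mod_cast hcardsum
      _ ≤ ∑ t ∈ T, (P L : ℝ) ^ κ * ∏ i : Fin (d + 1), (c i t : ℝ) ^ κ :=
          Finset.sum_le_sum hstep
      _ = (P L : ℝ) ^ κ * ∑ t ∈ T, ∏ i : Fin (d + 1), (c i t : ℝ) ^ κ := by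
          rw [Finset.mul_sum]
      _ ≤ (P L : ℝ) ^ κ * ∏ i : Fin (d + 1), (∑ t ∈ T, (c i t : ℝ)) ^ κ := by
          refine mul_le_mul_of_nonneg_left ?_ (Real.rpow_nonneg (Nat.cast_nonneg _) _)
          rw [hκ]
          exact holder
      _ ≤ (P L : ℝ) ^ κ * ∏ i : Fin (d + 1), ((P i.castSucc : ℝ)) ^ κ := by
          refine mul_le_mul_of_nonneg_left
            (Finset.prod_le_prod
              (fun i _ => Real.rpow_nonneg (Finset.sum_nonneg fun t _ => Nat.cast_nonneg _) _)
              fun i _ => ?_) (Real.rpow_nonneg (Nat.cast_nonneg _) _)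
          refine Real.rpow_le_rpow (Finset.sum_nonneg fun t _ => Nat.cast_nonneg _) ?_
            (le_of_lt (by rw [hκ]; positivity))
          exact_mod_cast h6 i
  -- finish
  have hrw : (P L : ℝ) ^ κ * ∏ i : Fin (d + 1), ((P i.castSucc : ℝ)) ^ κ
      = ((P L : ℝ) * ∏ i : Fin (d + 1), (P i.castSucc : ℝ)) ^ κ := by
    rw [Real.mul_rpow (Nat.cast_nonneg _) (Finset.prod_nonneg fun i _ => Nat.cast_nonneg _),
      ← Real.finset_prod_rpow _ _ (fun i _ => Nat.cast_nonneg _) _]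
  rw [hrw] at hsum
  have hfin : (A.card : ℝ) ^ (d + 1) ≤ (P L : ℝ) * ∏ i : Fin (d + 1), (P i.castSucc : ℝ) := by
    calc (A.card : ℝ) ^ (d + 1)
        ≤ (((P L : ℝ) * ∏ i : Fin (d + 1), (P i.castSucc : ℝ)) ^ κ) ^ (d + 1) :=
          pow_le_pow_left₀ (Nat.cast_nonneg _) hsum _
      _ = _ := root_pow (mul_nonneg (Nat.cast_nonneg _)
          (Finset.prod_nonneg fun i _ => Nat.cast_nonneg _))
  refine hfin.trans_eq ?_
  rw [Fin.prod_univ_castSucc (f := fun i : Fin (d + 2) => ((A.image fun x => x ∘ Fin.succAbove i).card : ℝ))]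
  rw [mul_comm]

end Step

lemma pow_root {d : ℕ} {b : ℝ} (hb : 0 ≤ b) :
    ((b ^ (d + 1) : ℝ)) ^ (((d : ℝ) + 1)⁻¹) = b := by
  rw [← Real.rpow_natCast b (d + 1), ← Real.rpow_mul hb]
  push_cast
  rw [mul_inv_cancel₀ (by positivity), Real.rpow_one]

lemma LW (d : ℕ) : ∀ A : Finset (Fin (d + 1) → ℤ), A.Nonempty →
    (A.card : ℝ) ^ d ≤
      ∏ i : Fin (d + 1), ((A.image fun x => x ∘ Fin.succAbove i).card : ℝ) := by
  induction d with
  | zero =>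
    intro A hne
    simp only [pow_zero]
    refine Finset.prod_induction _ (fun x => (1:ℝ) ≤ x)
      (fun a b ha hb => by nlinarith) le_rfl fun i _ => ?_
    have : (A.image fun x => x ∘ Fin.succAbove i).Nonempty := hne.image _
    show (1:ℝ) ≤ _
    exact_mod_cast Finset.card_pos.2 this
  | succ d ih =>
    intro A hne
    exact step d A hne ih

/-- Loomis–Whitney corollary: for finite nonempty `A ⊆ ℤ^{d+1}`, with `A_i` the
projection of `A` deleting the `i`-th coordinate, `∏_i |A_i| ≥ |A|^d`; consequently
some projection satisfies `|A_j| ≥ |A|^{d/(d+1)}`. -/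
theorem stmt_6 (d : ℕ) (A : Finset (Fin (d + 1) → ℤ)) (hne : A.Nonempty) :
    (A.card : ℝ) ^ d ≤
      ∏ i : Fin (d + 1), ((A.image fun x => x ∘ Fin.succAbove i).card : ℝ) ∧
    ∃ j : Fin (d + 1), (A.card : ℝ) ^ ((d : ℝ) / (d + 1)) ≤
      ((A.image fun x => x ∘ Fin.succAbove j).card : ℝ) := by
  refine ⟨LW d A hne, ?_⟩
  obtain ⟨j, -, hj⟩ := Finset.exists_max_image (Finset.univ : Finset (Fin (d + 1)))
    (fun i => ((A.image fun x => x ∘ Fin.succAbove i).card : ℝ)) Finset.univ_nonempty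
  refine ⟨j, ?_⟩
  set cj : ℝ := ((A.image fun x => x ∘ Fin.succAbove j).card : ℝ) with hcj
  have hcj0 : 0 ≤ cj := Nat.cast_nonneg _
  have h1 : (A.card : ℝ) ^ d ≤ cj ^ (d + 1) := by
    refine (LW d A hne).trans ?_
    have hle : ∏ i : Fin (d + 1), ((A.image fun x => x ∘ Fin.succAbove i).card : ℝ)
        ≤ ∏ _i : Fin (d + 1), cj :=
      Finset.prod_le_prod (fun i _ => Nat.cast_nonneg _) (fun i hi => hj i hi)
    simpa [Finset.prod_const, Finset.card_univ] using hle
  have ha : (0:ℝ) ≤ (A.card : ℝ) := Nat.cast_nonneg _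
  have key : (A.card : ℝ) ^ ((d : ℝ) / (d + 1))
      = ((A.card : ℝ) ^ d) ^ (((d : ℝ) + 1)⁻¹) := by
    rw [← Real.rpow_natCast (A.card : ℝ) d, ← Real.rpow_mul ha, div_eq_mul_inv]
  rw [key]
  calc ((A.card : ℝ) ^ d) ^ (((d : ℝ) + 1)⁻¹)
      ≤ (cj ^ (d + 1)) ^ (((d : ℝ) + 1)⁻¹) :=
        Real.rpow_le_rpow (pow_nonneg ha _) h1 (by positivity)
    _ = cj := pow_root hcj0
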